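/- The number of semistandard Young tableaux of rectangular shape with 2 rows, m columns, and entries in [n] equals a_{2,n,m} = Π_{i=1}^{2} Π_{j=1}^{m} (n - i + j)/(2 + m - i - j + 1). -/

import Mathlib

open Finset

/-- `allLT I J` means `max I < min J` (vacuously true if either set is empty). -/
def allLT (I J : Finset ℕ) : Prop := ∀ i ∈ I, ∀ j ∈ J, i < j

/-- `I` and `J` are weakly separated. -/
def WeaklySeparated (I J : Finset ℕ) : Prop :=
  (∃ I1 I2 : Finset ℕ, Disjoint I1 I2 ∧ I1 ∪ I2 = I \ J ∧
      allLT I1 (J \ I) ∧ allLT (J \ I) I2) ∨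
  (∃ J1 J2 : Finset ℕ, Disjoint J1 J2 ∧ J1 ∪ J2 = J \ I ∧
      allLT J1 (I \ J) ∧ allLT (I \ J) J2)

/-- the set `{i_a, i_{a+1}, ..., i_b}` of entries of `I` in (1-indexed) positions `a` to `b`. -/
def posSlice (I : Finset ℕ) (a b : ℕ) : Finset ℕ :=
  I.filter fun x => a ≤ (I.filter (· ≤ x)).card ∧ (I.filter (· ≤ x)).card ≤ b

/-- the pair of `k`-subsets `I`, `J` is noncrossing. -/
def Noncrossing (k : ℕ) (I J : Finset ℕ) : Prop :=
  ∀ a b : ℕ, 1 ≤ a → a < b → b ≤ k →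
    WeaklySeparated (posSlice I a b) (posSlice J a b) ∨
    posSlice I (a + 1) (b - 1) ≠ posSlice J (a + 1) (b - 1)

/-- the `a`-th smallest entry of `I` (1-indexed). -/
def nth (I : Finset ℕ) (a : ℕ) : ℕ := (I.sort (· ≤ ·)).getD (a - 1) 0

/-- `T` is a rectangular semistandard Young tableau with entries in `[n]`. -/
def IsSSYT {k m : ℕ} (n : ℕ) (T : Fin k → Fin m → ℕ) : Prop :=
  (∀ i j, T i j ∈ Finset.Icc 1 n) ∧
  (∀ i (j j' : Fin m), j ≤ j' → T i j ≤ T i j') ∧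
  (∀ (i i' : Fin k) j, i < i' → T i j < T i' j)

/-! ### Auxiliary machinery -/

/-- Hockey stick identity over `Icc a b` with casts into `ℚ`. -/
private lemma hs (r c : ℕ) : ∀ (b a : ℕ), a ≤ b + 1 →
    ∑ t ∈ Icc a b, (((t + c).choose r : ℚ)) =
      (((b + c + 1).choose (r + 1) : ℚ)) - (((a + c).choose (r + 1) : ℚ)) := by
  intro b
  induction b with
  | zero =>
    intro a ha
    interval_cases a
    · simp [Nat.choose_succ_succ]
    · rw [show (1 : ℕ) + c = c + 1 by omega]
      simp
  | succ b ih =>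
    intro a ha
    rcases Nat.lt_or_ge a (b + 2) with h | h
    · rcases Nat.lt_or_ge a (b + 1) with h' | h'
      · rw [Finset.sum_Icc_succ_top (by omega), ih a (by omega),
          show b + 1 + c = b + c + 1 by omega]
        have hps : ((b + c + 2).choose (r + 1) : ℚ)
            = ((b + c + 1).choose r : ℚ) + ((b + c + 1).choose (r + 1) : ℚ) := by
          exact_mod_cast congrArg (Nat.cast : ℕ → ℚ) (Nat.choose_succ_succ (b + c + 1) r)
        rw [show b + c + 1 + 1 = b + c + 2 by omega, hps]
        ring
      · have : a = b + 1 := by omega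
        subst this
        rw [Finset.Icc_self, Finset.sum_singleton]
        have hps : ((b + 1 + c + 1).choose (r + 1) : ℚ)
            = ((b + 1 + c).choose r : ℚ) + ((b + 1 + c).choose (r + 1) : ℚ) := by
          exact_mod_cast congrArg (Nat.cast : ℕ → ℚ) (Nat.choose_succ_succ (b + 1 + c) r)
        rw [hps]
        ring
    · have hempty : Icc a (b + 1) = ∅ := Finset.Icc_eq_empty (by omega)
      have : a = b + 2 := by omega
      subst this
      rw [hempty, Finset.sum_empty, show b + 2 + c = b + 1 + c + 1 by omega]
      simp

/-- The count of pairs of weakly increasing sequences of length `m`, the first valued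
in `{1,…,x}`, the second in `{1,…,y}`, with pointwise `a ≤ b`. -/
private def pcount : ℕ → ℕ → ℕ → ℕ
  | 0, _, _ => 1
  | m + 1, x, y => ∑ x' ∈ Icc 1 x, ∑ y' ∈ Icc x' y, pcount m x' y'

private lemma pcount_formula : ∀ (m : ℕ), ∀ x y : ℕ, x ≤ y →
    (pcount (m + 1) x y : ℚ) =
      ((x + m).choose (m + 1) : ℚ) * ((y + m + 1).choose (m + 1) : ℚ) -
        ((x + m + 1).choose (m + 2) : ℚ) * ((y + m).choose m : ℚ) := by
  intro m
  induction m with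
  | zero =>
    intro x y hxy
    rw [show pcount 1 x y = ∑ x' ∈ Icc 1 x, ∑ y' ∈ Icc x' y, pcount 0 x' y' from rfl]
    push_cast
    have inner : ∀ x' ∈ Icc 1 x, (∑ y' ∈ Icc x' y, (pcount 0 x' y' : ℚ)) =
        ((y + 1).choose 1 : ℚ) - (x'.choose 1 : ℚ) := by
      intro x' hx'
      obtain ⟨h1, h2⟩ := Finset.mem_Icc.mp hx'
      have := hs 0 0 y x' (by omega)
      simpa [pcount] using this
    rw [Finset.sum_congr rfl inner, Finset.sum_sub_distrib, Finset.sum_const]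
    have e2 : (∑ x' ∈ Icc 1 x, (x'.choose 1 : ℚ)) = ((x + 1).choose 2 : ℚ) := by
      have := hs 1 0 x 1 (by omega)
      simpa using this
    rw [e2]
    simp [Nat.card_Icc]
    ring
  | succ k ih =>
    intro x y hxy
    rw [show pcount (k + 2) x y = ∑ x' ∈ Icc 1 x, ∑ y' ∈ Icc x' y, pcount (k + 1) x' y'
        from rfl]
    push_cast
    have inner : ∀ x' ∈ Icc 1 x, (∑ y' ∈ Icc x' y, (pcount (k + 1) x' y' : ℚ)) =
        ((x' + k).choose (k + 1) : ℚ) * ((y + k + 2).choose (k + 2) : ℚ) -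
          ((x' + k + 1).choose (k + 2) : ℚ) * ((y + k + 1).choose (k + 1) : ℚ) := by
      intro x' hx'
      obtain ⟨h1, h2⟩ := Finset.mem_Icc.mp hx'
      have step1 : ∀ y' ∈ Icc x' y, (pcount (k + 1) x' y' : ℚ) =
          ((x' + k).choose (k + 1) : ℚ) * ((y' + k + 1).choose (k + 1) : ℚ) -
            ((x' + k + 1).choose (k + 2) : ℚ) * ((y' + k).choose k : ℚ) := by
        intro y' hy'
        exact ih x' y' (Finset.mem_Icc.mp hy').1
      rw [Finset.sum_congr rfl step1, Finset.sum_sub_distrib, ← Finset.mul_sum, ← Finset.mul_sum]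
      have e1 : (∑ y' ∈ Icc x' y, ((y' + k + 1).choose (k + 1) : ℚ)) =
          ((y + k + 2).choose (k + 2) : ℚ) - ((x' + k + 1).choose (k + 2) : ℚ) := by
        have := hs (k + 1) (k + 1) y x' (by omega)
        rw [Finset.sum_congr rfl (fun t _ => by rw [Nat.add_assoc] : ∀ t ∈ Icc x' y,
          ((t + k + 1).choose (k + 1) : ℚ) = ((t + (k + 1)).choose (k + 1) : ℚ)), this]
        rw [show y + (k + 1) + 1 = y + k + 2 by omega, show x' + (k + 1) = x' + k + 1 by omega]
      have e2 : (∑ y' ∈ Icc x' y, ((y' + k).choose k : ℚ)) =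
          ((y + k + 1).choose (k + 1) : ℚ) - ((x' + k).choose (k + 1) : ℚ) := by
        have := hs k k y x' (by omega)
        rw [this, show y + k + 1 = y + k + 1 from rfl]
      rw [e1, e2]
      ring
    rw [Finset.sum_congr rfl inner, Finset.sum_sub_distrib]
    have o1 : (∑ x' ∈ Icc 1 x, ((x' + k).choose (k + 1) : ℚ) * ((y + k + 2).choose (k + 2) : ℚ))
        = ((x + k + 1).choose (k + 2) : ℚ) * ((y + k + 2).choose (k + 2) : ℚ) := by
      rw [← Finset.sum_mul]
      congr 1
      have := hs (k + 1) k x 1 (by omega)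
      rw [this]
      rw [show (1 + k).choose (k + 2) = 0 from Nat.choose_eq_zero_of_lt (by omega)]
      push_cast
      ring
    have o2 : (∑ x' ∈ Icc 1 x, ((x' + k + 1).choose (k + 2) : ℚ) * ((y + k + 1).choose (k + 1) : ℚ))
        = ((x + k + 2).choose (k + 3) : ℚ) * ((y + k + 1).choose (k + 1) : ℚ) := by
      rw [← Finset.sum_mul]
      congr 1
      have := hs (k + 2) (k + 1) x 1 (by omega)
      rw [Finset.sum_congr rfl (fun t _ => by rw [Nat.add_assoc] : ∀ t ∈ Icc 1 x,
        ((t + k + 1).choose (k + 2) : ℚ) = ((t + (k + 1)).choose (k + 2) : ℚ)), this]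
      rw [show (1 + (k + 1)).choose (k + 3) = 0 from Nat.choose_eq_zero_of_lt (by omega)]
      rw [show x + (k + 1) + 1 = x + k + 2 by omega]
      push_cast
      ring
    rw [o1, o2]
    rw [show k + 1 + 1 = k + 2 by omega, show k + 1 + 2 = k + 3 by omega,
      show x + k + 1 + 1 = x + k + 2 by omega, show y + (k + 1) = y + k + 1 by omega]
    ring

/-- The finset of pairs of weakly increasing sequences `Fin m → Fin n` with value bounds
`< x`, `< y` respectively, and pointwise `≤`. -/
private def PS (n m x y : ℕ) : Finset ((Fin m → Fin n) × (Fin m → Fin n)) :=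
  Finset.univ.filter fun ab =>
    (∀ j j' : Fin m, j ≤ j' → ab.1 j ≤ ab.1 j') ∧
    (∀ j j' : Fin m, j ≤ j' → ab.2 j ≤ ab.2 j') ∧
    (∀ j, (ab.1 j : ℕ) < x) ∧ (∀ j, (ab.2 j : ℕ) < y) ∧
    (∀ j, ab.1 j ≤ ab.2 j)

private lemma PS_card (n : ℕ) : ∀ (m x y : ℕ), x ≤ n → y ≤ n →
    (PS n m x y).card = pcount m x y := by
  intro m
  induction m with
  | zero =>
    intro x y hx hy
    rw [PS, Finset.filter_true_of_mem (fun ab _ => ⟨fun j => j.elim0, fun j => j.elim0,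
      fun j => j.elim0, fun j => j.elim0, fun j => j.elim0⟩), Finset.card_univ]
    rw [show pcount 0 x y = 1 from rfl]
    simp
  | succ k ih =>
    intro x y hx hy
    rw [show pcount (k + 1) x y = ∑ x' ∈ Icc 1 x, ∑ y' ∈ Icc x' y, pcount k x' y' from rfl]
    rw [Finset.sum_sigma']
    have key : ∀ ab ∈ PS n (k + 1) x y,
        (⟨((ab.1 (Fin.last k) : ℕ)) + 1, ((ab.2 (Fin.last k) : ℕ)) + 1⟩ : Σ _ : ℕ, ℕ)
          ∈ (Icc 1 x).sigma fun x' => Icc x' y := by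
      intro ab hab
      obtain ⟨-, h⟩ := Finset.mem_filter.mp hab
      obtain ⟨h1, h2, h3, h4, h5⟩ := h
      simp only [Finset.mem_sigma, Finset.mem_Icc]
      refine ⟨⟨by omega, ?_⟩, ?_, ?_⟩
      · have := h3 (Fin.last k); omega
      · have := h5 (Fin.last k); rw [Fin.le_def] at this; omega
      · have := h4 (Fin.last k); omega
    rw [Finset.card_eq_sum_card_fiberwise key]
    apply Finset.sum_congr rfl
    rintro ⟨x', y'⟩ hp
    simp only [Finset.mem_sigma, Finset.mem_Icc] at hp
    obtain ⟨⟨hx'1, hx'2⟩, hy'1, hy'2⟩ := hp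
    rw [← ih x' y' (by omega) (by omega)]
    refine Finset.card_bij' (fun ab _ => (fun j => ab.1 j.castSucc, fun j => ab.2 j.castSucc))
      (fun cd _ => (Fin.snoc cd.1 ⟨x' - 1, by omega⟩, Fin.snoc cd.2 ⟨y' - 1, by omega⟩))
      ?_ ?_ ?_ ?_
    · -- forward maps into PS n k x' y'
      intro ab hab
      rw [Finset.mem_filter] at hab
      obtain ⟨hmem, hfib⟩ := hab
      obtain ⟨-, h1, h2, h3, h4, h5⟩ := Finset.mem_filter.mp hmem
      simp only [Sigma.ext_iff, heq_eq_eq] at hfib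
      obtain ⟨ha, hb⟩ := hfib
      rw [PS, Finset.mem_filter]
      refine ⟨Finset.mem_univ _, fun j j' hj => h1 _ _ (by rw [Fin.le_def] at hj ⊢; simpa using hj),
        fun j j' hj => h2 _ _ (by rw [Fin.le_def] at hj ⊢; simpa using hj), ?_, ?_, fun j => h5 _⟩
      · intro j
        have hle : ab.1 j.castSucc ≤ ab.1 (Fin.last k) := h1 _ _ (Fin.le_last _)
        rw [Fin.le_def] at hle
        show (ab.1 j.castSucc : ℕ) < x'
        omega
      · intro j
        have hle : ab.2 j.castSucc ≤ ab.2 (Fin.last k) := h2 _ _ (Fin.le_last _)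
        rw [Fin.le_def] at hle
        show (ab.2 j.castSucc : ℕ) < y'
        omega
    · -- backward maps into the fiber
      intro cd hcd
      obtain ⟨-, h1, h2, h3, h4, h5⟩ := Finset.mem_filter.mp hcd
      rw [Finset.mem_filter]
      constructor
      · rw [PS, Finset.mem_filter]
        refine ⟨Finset.mem_univ _, ?_, ?_, ?_, ?_, ?_⟩
        · intro j j' hj
          rcases Fin.eq_castSucc_or_eq_last j' with ⟨j1, rfl⟩ | rfl
          · rcases Fin.eq_castSucc_or_eq_last j with ⟨j0, rfl⟩ | rfl
            · simp only [Fin.snoc_castSucc]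
              refine h1 j0 j1 ?_
              rw [Fin.le_def] at hj ⊢
              simpa using hj
            · exfalso
              rw [Fin.le_def] at hj
              simp at hj
              have := j1.isLt
              omega
          · rcases Fin.eq_castSucc_or_eq_last j with ⟨j0, rfl⟩ | rfl
            · simp only [Fin.snoc_castSucc, Fin.snoc_last]
              rw [Fin.le_def]
              have := h3 j0
              show (cd.1 j0 : ℕ) ≤ x' - 1
              omega
            · exact le_refl _
        · intro j j' hj
          rcases Fin.eq_castSucc_or_eq_last j' with ⟨j1, rfl⟩ | rfl
          · rcases Fin.eq_castSucc_or_eq_last j with ⟨j0, rfl⟩ | rfl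
            · simp only [Fin.snoc_castSucc]
              refine h2 j0 j1 ?_
              rw [Fin.le_def] at hj ⊢
              simpa using hj
            · exfalso
              rw [Fin.le_def] at hj
              simp at hj
              have := j1.isLt
              omega
          · rcases Fin.eq_castSucc_or_eq_last j with ⟨j0, rfl⟩ | rfl
            · simp only [Fin.snoc_castSucc, Fin.snoc_last]
              rw [Fin.le_def]
              have := h4 j0
              show (cd.2 j0 : ℕ) ≤ y' - 1
              omega
            · exact le_refl _
        · intro j
          rcases Fin.eq_castSucc_or_eq_last j with ⟨j0, rfl⟩ | rfl
          · simp only [Fin.snoc_castSucc]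
            have := h3 j0
            omega
          · simp only [Fin.snoc_last]
            show x' - 1 < x
            omega
        · intro j
          rcases Fin.eq_castSucc_or_eq_last j with ⟨j0, rfl⟩ | rfl
          · simp only [Fin.snoc_castSucc]
            have := h4 j0
            omega
          · simp only [Fin.snoc_last]
            show y' - 1 < y
            omega
        · intro j
          rcases Fin.eq_castSucc_or_eq_last j with ⟨j0, rfl⟩ | rfl
          · simp only [Fin.snoc_castSucc]
            exact h5 j0
          · simp only [Fin.snoc_last]
            rw [Fin.le_def]
            show x' - 1 ≤ y' - 1
            omega
      · simp only [Fin.snoc_last, Sigma.ext_iff, heq_eq_eq]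
        refine ⟨?_, ?_⟩
        · show x' - 1 + 1 = x'
          omega
        · show y' - 1 + 1 = y'
          omega
    · -- left inverse
      intro ab hab
      dsimp only
      rw [Finset.mem_filter] at hab
      obtain ⟨hmem, hfib⟩ := hab
      simp only [Sigma.ext_iff, heq_eq_eq] at hfib
      obtain ⟨ha, hb⟩ := hfib
      refine Prod.ext ?_ ?_
      · funext j
        rcases Fin.eq_castSucc_or_eq_last j with ⟨j0, rfl⟩ | rfl
        · simp only [Fin.snoc_castSucc]
        · simp only [Fin.snoc_last]
          refine Fin.ext ?_
          show x' - 1 = (ab.1 (Fin.last k) : ℕ)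
          omega
      · funext j
        rcases Fin.eq_castSucc_or_eq_last j with ⟨j0, rfl⟩ | rfl
        · simp only [Fin.snoc_castSucc]
        · simp only [Fin.snoc_last]
          refine Fin.ext ?_
          show y' - 1 = (ab.2 (Fin.last k) : ℕ)
          omega
    · -- right inverse
      intro cd hcd
      dsimp only
      refine Prod.ext ?_ ?_ <;> funext j <;> simp [Fin.snoc_castSucc]

/-- Product of consecutive casts equals a binomial times a factorial. -/
private lemma num_prod (q : ℕ) : ∀ (m : ℕ),
    ∏ j ∈ Icc 1 m, ((q : ℚ) + (j : ℚ)) = ((q + m).choose m : ℚ) * (m.factorial : ℚ) := by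
  intro m
  induction m with
  | zero => simp
  | succ m ih =>
    rw [Finset.prod_Icc_succ_top (by omega), ih]
    have h' : (q + m + 1) * (q + m).choose m = (q + m + 1).choose (m + 1) * (m + 1) := by
      simpa [Nat.succ_eq_add_one] using Nat.add_one_mul_choose_eq (q + m) m
    have hq : ((q + m + 1 : ℕ) : ℚ) * ((q + m).choose m : ℚ)
        = ((q + m + 1).choose (m + 1) : ℚ) * ((m + 1 : ℕ) : ℚ) :=
      by exact_mod_cast congrArg (Nat.cast : ℕ → ℚ) h'
    rw [show q + (m + 1) = q + m + 1 by omega, Nat.factorial_succ]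
    push_cast at hq ⊢
    linear_combination ((m.factorial : ℚ)) * hq

private lemma factQ : ∀ (m : ℕ), ∏ j ∈ Icc 1 m, (j : ℚ) = (m.factorial : ℚ) := by
  intro m
  induction m with
  | zero => simp
  | succ m ih =>
    rw [Finset.prod_Icc_succ_top (by omega), ih, Nat.factorial_succ]
    push_cast
    ring

private lemma den_prod (m : ℕ) : ∏ j ∈ Icc 1 m, ((m : ℚ) + 1 - (j : ℚ)) = (m.factorial : ℚ) := by
  rw [← factQ m]
  refine Finset.prod_nbij' (fun j => m + 1 - j) (fun j => m + 1 - j) ?_ ?_ ?_ ?_ ?_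
  · intro a ha; simp only [Finset.mem_Icc] at ha ⊢; omega
  · intro a ha; simp only [Finset.mem_Icc] at ha ⊢; omega
  · intro a ha; simp only [Finset.mem_Icc] at ha
    show m + 1 - (m + 1 - a) = a
    omega
  · intro a ha; simp only [Finset.mem_Icc] at ha
    show m + 1 - (m + 1 - a) = a
    omega
  · intro a ha
    simp only [Finset.mem_Icc] at ha
    have : ((m + 1 - a : ℕ) : ℚ) = (m : ℚ) + 1 - (a : ℚ) := by
      push_cast [Nat.cast_sub (by omega : a ≤ m + 1)]; ring
    rw [this]

/-- The number of 2-row, `m`-column rectangular SSYT with entries in `[n]` equals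
`a_{2,n,m}`. -/
theorem count_two_row_ssyt
    (m n : ℕ) :
    ((Finset.univ.filter (fun T : Fin 2 → Fin m → Fin n =>
        (∀ (i : Fin 2) (j j' : Fin m), j ≤ j' → T i j ≤ T i j') ∧
        (∀ (i i' : Fin 2) (j : Fin m), i < i' → T i j < T i' j))).card : ℚ)
      = ∏ i ∈ Finset.Icc (1:ℕ) 2, ∏ j ∈ Finset.Icc (1:ℕ) m,
          (((n : ℚ) - (i:ℚ) + (j:ℚ)) / ((2 : ℚ) + (m:ℚ) - (i:ℚ) - (j:ℚ) + 1)) := by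
  classical
  rcases Nat.eq_zero_or_pos m with hm | hm
  · subst hm
    rw [Finset.filter_true_of_mem (fun T _ => ⟨fun i j => j.elim0, fun i i' j => j.elim0⟩)]
    simp
  rcases Nat.eq_zero_or_pos n with hn | hn
  · subst hn
    haveI hE : IsEmpty (Fin 2 → Fin m → Fin 0) := ⟨fun f => (f 0 ⟨0, hm⟩).elim0⟩
    rw [Finset.univ_eq_empty, Finset.filter_empty, Finset.card_empty]
    symm
    apply Finset.prod_eq_zero (Finset.mem_Icc.mpr ⟨le_refl 1, by omega⟩ : (1:ℕ) ∈ Icc 1 2)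
    apply Finset.prod_eq_zero (Finset.mem_Icc.mpr ⟨le_refl 1, hm⟩ : (1:ℕ) ∈ Icc 1 m)
    norm_num
  -- main case: m ≥ 1, n ≥ 1
  obtain ⟨q, rfl⟩ : ∃ q, n = q + 1 := ⟨n - 1, by omega⟩
  obtain ⟨k, rfl⟩ : ∃ k, m = k + 1 := ⟨m - 1, by omega⟩
  clear hm hn
  -- Step 1: the count equals (PS (q+1) (k+1) q q).card
  have hbij : (Finset.univ.filter (fun T : Fin 2 → Fin (k+1) → Fin (q+1) =>
        (∀ (i : Fin 2) (j j' : Fin (k+1)), j ≤ j' → T i j ≤ T i j') ∧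
        (∀ (i i' : Fin 2) (j : Fin (k+1)), i < i' → T i j < T i' j))).card
      = (PS (q+1) (k+1) q q).card := by
    have hlt : ∀ (T : Fin 2 → Fin (k+1) → Fin (q+1)),
        (∀ (i i' : Fin 2) (j : Fin (k+1)), i < i' → T i j < T i' j) ↔
        (∀ j, T 0 j < T 1 j) := by
      intro T
      constructor
      · intro h j; exact h 0 1 j (by norm_num)
      · intro h i i' j hii'
        have hi : (i : ℕ) = 0 ∧ (i' : ℕ) = 1 := by
          have := i.isLt; have := i'.isLt; have := (Fin.lt_def.mp hii'); omega
        have : i = 0 := Fin.ext (by omega)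
        have : i' = 1 := Fin.ext (by omega)
        subst this; subst ‹i = 0›
        exact h j
    have fin2 : ∀ i : Fin 2, i = 0 ∨ i = 1 := by decide
    refine Finset.card_bij'
      (fun T _ => ((T 0), fun j => (⟨(T 1 j : ℕ) - 1, by have := (T 1 j).isLt; omega⟩ : Fin (q+1))))
      (fun ab hab => ![ab.1, fun j => (⟨(ab.2 j : ℕ) + 1, by
          have h4 : ((ab.2 j : ℕ)) < q := ((Finset.mem_filter.mp hab).2).2.2.2.1 j
          omega⟩ : Fin (q+1))])
      ?_ ?_ ?_ ?_
    · intro T hT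
      obtain ⟨-, h1, h2⟩ := Finset.mem_filter.mp hT
      rw [(hlt T)] at h2
      rw [PS, Finset.mem_filter]
      refine ⟨Finset.mem_univ _, ?_, ?_, ?_, ?_, ?_⟩
      · intro j j' hj
        exact h1 0 j j' hj
      · intro j j' hj
        have hv := h1 1 j j' hj
        rw [Fin.le_def] at hv
        show ((⟨(T 1 j : ℕ) - 1, by have := (T 1 j).isLt; omega⟩ : Fin (q+1)))
          ≤ ⟨(T 1 j' : ℕ) - 1, by have := (T 1 j').isLt; omega⟩
        rw [Fin.mk_le_mk]
        omega
      · intro j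
        have hlt2 := Fin.lt_def.mp (h2 j)
        have := (T 1 j).isLt
        show (T 0 j : ℕ) < q
        omega
      · intro j
        have hlt2 := Fin.lt_def.mp (h2 j)
        have := (T 1 j).isLt
        show (T 1 j : ℕ) - 1 < q
        omega
      · intro j
        have hlt2 := Fin.lt_def.mp (h2 j)
        show T 0 j ≤ ⟨(T 1 j : ℕ) - 1, by have := (T 1 j).isLt; omega⟩
        rw [Fin.le_def]
        show (T 0 j : ℕ) ≤ (T 1 j : ℕ) - 1
        omega
    · intro ab hab
      obtain ⟨-, h1, h2, h3, h4, h5⟩ := Finset.mem_filter.mp hab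
      rw [Finset.mem_filter]
      refine ⟨Finset.mem_univ _, ?_, ?_⟩
      · intro i j j' hj
        rcases fin2 i with rfl | rfl
        · simp only [Matrix.cons_val_zero]
          exact h1 j j' hj
        · simp only [Matrix.cons_val_one, Matrix.head_cons, Matrix.cons_val_zero]
          have hv := h2 j j' hj
          rw [Fin.le_def] at hv
          rw [Fin.mk_le_mk]
          omega
      · rw [hlt]
        intro j
        simp only [Matrix.cons_val_zero, Matrix.cons_val_one, Matrix.head_cons]
        have hv := h5 j
        rw [Fin.le_def] at hv
        rw [Fin.lt_def]
        show (ab.1 j : ℕ) < (ab.2 j : ℕ) + 1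
        omega
    · intro T hT
      obtain ⟨-, h1, h2⟩ := Finset.mem_filter.mp hT
      rw [hlt T] at h2
      funext i
      rcases fin2 i with rfl | rfl
      · simp only [Matrix.cons_val_zero]
      · simp only [Matrix.cons_val_one, Matrix.head_cons]
        funext j
        have hlt2 := Fin.lt_def.mp (h2 j)
        refine Fin.ext ?_
        show (T 1 j : ℕ) - 1 + 1 = (T 1 j : ℕ)
        omega
    · intro ab hab
      refine Prod.ext ?_ ?_
      · dsimp only
        simp only [Matrix.cons_val_zero]
      · funext j
        refine Fin.ext ?_
        show ((![ab.1, fun j => (⟨(ab.2 j : ℕ) + 1, by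
            have h4 : ((ab.2 j : ℕ)) < q := ((Finset.mem_filter.mp hab).2).2.2.2.1 j
            omega⟩ : Fin (q+1))] : Fin 2 → Fin (k+1) → Fin (q+1)) 1 j : ℕ) - 1 = (ab.2 j : ℕ)
        simp only [Matrix.cons_val_one, Matrix.head_cons, Matrix.cons_val_zero]
        omega
  rw [hbij]
  clear hbij
  rw [PS_card (q+1) (k+1) q q (Nat.le_succ q) (Nat.le_succ q)]
  -- Step 2: the RHS product
  have hIcc2 : Icc (1:ℕ) 2 = {1, 2} := rfl
  rw [hIcc2, Finset.prod_insert (by norm_num), Finset.prod_singleton]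
  rcases Nat.eq_zero_or_pos q with hq | hq
  · subst hq
    -- pcount (k+1) 0 0 = 0 and the second product has a zero factor
    have hL : pcount (k+1) 0 0 = 0 := by
      rw [show pcount (k+1) 0 0 = ∑ x' ∈ Icc 1 0, ∑ y' ∈ Icc x' 0, pcount k x' y' from rfl]
      simp
    rw [hL, Nat.cast_zero]
    symm
    rw [mul_eq_zero]
    right
    apply Finset.prod_eq_zero (Finset.mem_Icc.mpr ⟨le_refl 1, by omega⟩ : (1:ℕ) ∈ Icc 1 (k+1))
    norm_num
  obtain ⟨q', rfl⟩ : ∃ q', q = q' + 1 := ⟨q - 1, by omega⟩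
  clear hq
  -- evaluate the products
  have hF : (((k+1).factorial : ℚ)) ≠ 0 := Nat.cast_ne_zero.mpr (Nat.factorial_ne_zero _)
  have hrow1 : (∏ j ∈ Icc 1 (k+1),
      (((q' + 1 + 1 : ℕ) : ℚ) - ((1:ℕ):ℚ) + (j:ℚ)) / ((2:ℚ) + ((k+1 : ℕ):ℚ) - ((1:ℕ):ℚ) - (j:ℚ) + 1))
      = (((q' + k + 2).choose (k+1) : ℚ) * ((k+1).factorial : ℚ)) / (((k+2).factorial : ℚ)) := by
    rw [Finset.prod_div_distrib]
    have hn1 : (∏ j ∈ Icc 1 (k+1), (((q' + 1 + 1 : ℕ) : ℚ) - ((1:ℕ):ℚ) + (j:ℚ)))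
        = ((q' + k + 2).choose (k+1) : ℚ) * ((k+1).factorial : ℚ) := by
      have h := num_prod (q' + 1) (k+1)
      rw [show q' + 1 + (k+1) = q' + k + 2 by omega] at h
      rw [← h]
      apply Finset.prod_congr rfl
      intro j hj
      push_cast
      ring
    have hd1 : (∏ j ∈ Icc 1 (k+1), ((2:ℚ) + ((k+1 : ℕ):ℚ) - ((1:ℕ):ℚ) - (j:ℚ) + 1))
        = ((k+2).factorial : ℚ) := by
      have h := den_prod (k+2)
      rw [Finset.prod_Icc_succ_top (by omega)] at h
      have hlast : ((k+2 : ℕ) : ℚ) + 1 - ((k+2 : ℕ) : ℚ) = 1 := by push_cast; ring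
      rw [hlast, mul_one] at h
      rw [← h]
      apply Finset.prod_congr rfl
      intro j hj
      push_cast
      ring
    rw [hn1, hd1]
  have hrow2 : (∏ j ∈ Icc 1 (k+1),
      (((q' + 1 + 1 : ℕ) : ℚ) - ((2:ℕ):ℚ) + (j:ℚ)) / ((2:ℚ) + ((k+1 : ℕ):ℚ) - ((2:ℕ):ℚ) - (j:ℚ) + 1))
      = (((q' + k + 1).choose (k+1) : ℚ) * ((k+1).factorial : ℚ)) / (((k+1).factorial : ℚ)) := by
    rw [Finset.prod_div_distrib]
    have hn2 : (∏ j ∈ Icc 1 (k+1), (((q' + 1 + 1 : ℕ) : ℚ) - ((2:ℕ):ℚ) + (j:ℚ)))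
        = ((q' + k + 1).choose (k+1) : ℚ) * ((k+1).factorial : ℚ) := by
      have h := num_prod q' (k+1)
      rw [show q' + (k+1) = q' + k + 1 by omega] at h
      rw [← h]
      apply Finset.prod_congr rfl
      intro j hj
      push_cast
      ring
    have hd2 : (∏ j ∈ Icc 1 (k+1), ((2:ℚ) + ((k+1 : ℕ):ℚ) - ((2:ℕ):ℚ) - (j:ℚ) + 1))
        = ((k+1).factorial : ℚ) := by
      rw [← den_prod (k+1)]
      apply Finset.prod_congr rfl
      intro j hj
      push_cast
      ring
    rw [hn2, hd2]
  rw [hrow1, hrow2]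
  rw [pcount_formula k (q'+1) (q'+1) (le_refl _)]
  rw [show q' + 1 + k = q' + k + 1 by ring]
  rw [show q' + k + 1 + 1 = q' + k + 2 by ring]
  have h1 := Nat.choose_succ_right_eq (q' + k + 2) (k + 1)
  have h2 := Nat.choose_succ_right_eq (q' + k + 1) k
  rw [show q' + k + 2 - (k+1) = q' + 1 by omega] at h1
  rw [show q' + k + 1 - k = q' + 1 by omega] at h2
  have h1q : ((q'+k+2).choose (k+2) : ℚ) * ((k:ℚ)+2) = ((q'+k+2).choose (k+1) : ℚ) * ((q':ℚ)+1) := by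
    exact_mod_cast congrArg (Nat.cast : ℕ → ℚ) h1
  have h2q : ((q'+k+1).choose (k+1) : ℚ) * ((k:ℚ)+1) = ((q'+k+1).choose k : ℚ) * ((q':ℚ)+1) := by
    exact_mod_cast congrArg (Nat.cast : ℕ → ℚ) h2
  have hRHS : (((q' + k + 2).choose (k+1) : ℚ) * ((k+1).factorial : ℚ)) / (((k+2).factorial : ℚ))
      * ((((q' + k + 1).choose (k+1) : ℚ) * ((k+1).factorial : ℚ)) / (((k+1).factorial : ℚ)))
      = ((q' + k + 2).choose (k+1) : ℚ) * ((q' + k + 1).choose (k+1) : ℚ) / ((k:ℚ)+2) := by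
    rw [Nat.factorial_succ (k+1)]
    have hk2 : ((k:ℚ)+2) ≠ 0 := by positivity
    field_simp
    push_cast
    ring
  rw [hRHS, eq_div_iff (by positivity : ((k:ℚ)+2) ≠ 0)]
  linear_combination (((q'+k+2).choose (k+1) : ℚ)) * h2q - (((q'+k+1).choose k : ℚ)) * h1q
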